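/- arXiv:1205.5534 — 4 statements merged into one kernel-verified Lean document; each statement's English description precedes it below -/
import Mathlib

section
/- For every prime p and integer g ≥ 1, every complex root of the polynomial F(t) = 1 + ∑_{j=1}^{g-1} (p^j - p^{j-1}) t^{2j} + p^g t^{2g} has absolute value p^{-1/2}. -/
open Finset

/-- The polynomial `F(t) = 1 + ∑_{j=1}^{g-1} (p^j - p^{j-1}) t^{2j} + p^g t^{2g}`. -/
noncomputable def Fone (p g : ℕ) (t : ℂ) : ℂ :=
  1 + (∑ j ∈ Finset.Icc 1 (g - 1), ((p : ℂ) ^ j - (p : ℂ) ^ (j - 1)) * t ^ (2 * j))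
    + (p : ℂ) ^ g * t ^ (2 * g)

/-!
In the variable `u = p t²` the coefficients telescope: `(u - 1) · p · F(t) = u^g (p u - 1) - (p - u)`.
So at a root, `‖u‖^g ‖p u - 1‖ = ‖p - u‖`. Since `‖p u - 1‖² - ‖p - u‖² = (p² - 1)(‖u‖² - 1)`,
the two sides compare the wrong way round as soon as `‖u‖ ≠ 1`; hence `‖u‖ = 1`, i.e. `p ‖t‖² = 1`.
-/

theorem sub_one_mul_mul_Fone (p : ℕ) {g : ℕ} (hg : 1 ≤ g) (t : ℂ) :
    ((p : ℂ) * t ^ 2 - 1) * ((p : ℂ) * Fone p g t) =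
      ((p : ℂ) * t ^ 2) ^ g * ((p : ℂ) * ((p : ℂ) * t ^ 2) - 1) - ((p : ℂ) - (p : ℂ) * t ^ 2) := by
  set u : ℂ := (p : ℂ) * t ^ 2
  have hcoeff : (p : ℂ) * ∑ j ∈ Icc 1 (g - 1), ((p : ℂ) ^ j - (p : ℂ) ^ (j - 1)) * t ^ (2 * j)
      = ((p : ℂ) - 1) * ∑ j ∈ Ico 1 g, u ^ j := by
    rw [show Icc 1 (g - 1) = Ico 1 g by ext; simp; omega, mul_sum, mul_sum]
    refine sum_congr rfl fun j hj => ?_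
    obtain ⟨j, rfl⟩ : ∃ i, j = i + 1 := ⟨j - 1, by simp at hj; omega⟩
    simp only [u, mul_pow, ← pow_mul, add_tsub_cancel_right, pow_succ]
    ring
  have hgeom : (∑ j ∈ Ico 1 g, u ^ j) * (u - 1) = u ^ g - u := by
    simpa using geom_sum_Ico_mul u hg
  have htop : (p : ℂ) ^ g * t ^ (2 * g) = u ^ g := by rw [mul_pow, pow_mul]
  unfold Fone
  linear_combination (u - 1) * hcoeff + ((p : ℂ) - 1) * hgeom + (p : ℂ) * (u - 1) * htop

theorem norm_mul_sub_one_sq_sub_norm_sub_sq (q : ℝ) (u : ℂ) :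
    ‖(q : ℂ) * u - 1‖ ^ 2 - ‖(q : ℂ) - u‖ ^ 2 = (q ^ 2 - 1) * (‖u‖ ^ 2 - 1) := by
  simp only [Complex.sq_norm, Complex.normSq_apply, Complex.sub_re, Complex.sub_im,
    Complex.mul_re, Complex.mul_im, Complex.ofReal_re, Complex.ofReal_im, Complex.one_re,
    Complex.one_im]
  ring

theorem norm_eq_one_of_norm_pow_mul_norm_eq {q : ℝ} (hq : 1 < q) (n : ℕ) {u : ℂ}
    (h : ‖u‖ ^ n * ‖(q : ℂ) * u - 1‖ = ‖(q : ℂ) - u‖) : ‖u‖ = 1 := by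
  have hdiff := norm_mul_sub_one_sq_sub_norm_sub_sq q u
  have hq2 : 0 < q ^ 2 - 1 := by nlinarith
  rcases lt_trichotomy ‖u‖ 1 with hlt | heq | hgt
  · have hsq : ‖(q : ℂ) * u - 1‖ ^ 2 < ‖(q : ℂ) - u‖ ^ 2 := by
      nlinarith [mul_neg_of_pos_of_neg hq2 (by nlinarith [norm_nonneg u] : ‖u‖ ^ 2 - 1 < 0)]
    have hsmall := lt_of_pow_lt_pow_left₀ 2 (norm_nonneg _) hsq
    have hpow : ‖u‖ ^ n ≤ 1 := pow_le_one₀ (norm_nonneg u) hlt.le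
    nlinarith [norm_nonneg ((q : ℂ) * u - 1)]
  · exact heq
  · have hsq : ‖(q : ℂ) - u‖ ^ 2 < ‖(q : ℂ) * u - 1‖ ^ 2 := by
      nlinarith [mul_pos hq2 (by nlinarith : 0 < ‖u‖ ^ 2 - 1)]
    have hbig := lt_of_pow_lt_pow_left₀ 2 (norm_nonneg _) hsq
    have hpow : 1 ≤ ‖u‖ ^ n := one_le_pow₀ hgt.le
    nlinarith [norm_nonneg ((q : ℂ) - u)]

theorem eq_rpow_neg_half_of_mul_sq_eq_one {q x : ℝ} (hq : 0 < q) (hx : 0 ≤ x)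
    (h : q * x ^ 2 = 1) : x = q ^ (-(1 / 2 : ℝ)) := by
  rw [Real.rpow_neg hq.le, ← Real.sqrt_eq_rpow]
  refine eq_inv_of_mul_eq_one_left ?_
  have hsq : (x * √q) ^ 2 = 1 := by rw [mul_pow, Real.sq_sqrt hq.le]; linarith
  nlinarith [mul_nonneg hx (Real.sqrt_nonneg q)]

/-- "Local Riemann hypothesis": every complex root of `F` has absolute value `p^{-1/2}`. -/
theorem stmt2 (p g : ℕ) (hp : p.Prime) (hg : 1 ≤ g) (z : ℂ) (hz : Fone p g z = 0) :
    ‖z‖ = (p : ℝ) ^ (-(1 / 2 : ℝ)) := by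
  have key := sub_one_mul_mul_Fone p hg z
  rw [hz, mul_zero, mul_zero, eq_comm, sub_eq_zero, ← Complex.ofReal_natCast] at key
  have hu : ‖(p : ℂ) * z ^ 2‖ = 1 := by
    rw [← Complex.ofReal_natCast]
    refine norm_eq_one_of_norm_pow_mul_norm_eq (q := p) (by exact_mod_cast hp.one_lt) g ?_
    rw [← norm_pow, ← norm_mul, key]
  rw [norm_mul, norm_pow, Complex.norm_natCast] at hu
  exact eq_rpow_neg_half_of_mul_sq_eq_one (by exact_mod_cast hp.pos) (norm_nonneg z) hu
end

section
/- Let x ≥ 2 be a real number, ε ∈ (0,1), and q a squarefree positive integer. Then ∑_{d ∣ q} d / (log(d·x))^{2-ε} ≤ K · q · log log(e^e·q) / (log(q·x))^{2-ε} for some absolute constant K. -/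
/-!
For `x ≥ 2` and `1 ≤ d ≤ q` one has `log (q x) / log (d x) ≤ log (2q) / log (2d) =: r`, and
`r ≥ 1`, so `r ^ (2 - ε) ≤ r ^ 2` and each term is at most `d r² / log (q x) ^ (2 - ε)`.
If `d⁴ ≥ q` then `r ≤ 4`; if `d⁴ < q` then `d r² ≪ d (log q)² ≪ q / d`.
As `∑_{d ∣ q} q / d = σ(q)`, everything reduces to `σ(q) ≪ q log log (e^e q)`.

For squarefree `q`, `σ(q) / q = ∏_{p ∣ q} (1 + 1/p) ≤ exp ∑_{p ∣ q} 1/p`.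
The prime factors above `ω(q) + 2` contribute at most `1`, and those below it are controlled by
`∑_{p ≤ n} 1/p ≤ log log n + O(1)`. That bound follows by partial summation from
`∑_{p ≤ n} log p / p ≤ log n + log 4`, which in turn comes from Legendre's formula for `n!`
and Chebyshev's `θ(n) ≤ n log 4`.
-/

open Finset Real
open scoped Nat

lemma Nat.div_le_factorization_factorial {p : ℕ} (hp : p.Prime) (n : ℕ) :
    n / p ≤ (n !).factorization p := by
  rcases lt_or_ge n p with hnp | hpn
  · simp [Nat.div_eq_of_lt hnp]
  rw [Nat.factorization_factorial hp (Nat.lt_succ_self _)]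
  have h1 : 1 ∈ Ico 1 (Nat.log p n + 1) := by
    simpa using Nat.log_pos hp.one_lt hpn
  simpa using single_le_sum (f := fun i => n / p ^ i) (fun _ _ => Nat.zero_le _) h1

lemma sum_primesLE_div_mul_log_le_log_factorial (n : ℕ) :
    ∑ p ∈ n.primesLE, ((n / p : ℕ) : ℝ) * log p ≤ log (n ! : ℕ) := by
  have hsupp : (n !).factorization.support ⊆ n.primesLE := by
    intro p hp
    refine Nat.mem_primesLE.mpr ⟨?_, Nat.prime_of_mem_primeFactors (by simpa using hp)⟩
    by_contra! h
    exact Finsupp.mem_support_iff.mp hp (Nat.factorization_factorial_eq_zero_of_lt h)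
  rw [log_nat_eq_sum_factorization, Finsupp.sum_of_support_subset _ hsupp _ (by simp)]
  gcongr with p hp
  exact Nat.div_le_factorization_factorial (Nat.mem_primesLE.mp hp).2 n

lemma sum_primesLE_log_div_le {n : ℕ} (hn : n ≠ 0) :
    ∑ p ∈ n.primesLE, log p / p ≤ log n + log 4 := by
  have hn0 : (0 : ℝ) < n := by positivity
  rw [← mul_le_mul_iff_right₀ hn0]
  calc (n : ℝ) * ∑ p ∈ n.primesLE, log p / p
      = ∑ p ∈ n.primesLE, ((n : ℝ) / p) * log p := by
        rw [mul_sum]; congr! 1 with p; ring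
    _ ≤ ∑ p ∈ n.primesLE, (((n / p : ℕ) : ℝ) * log p + log p) := by
        gcongr with p hp
        rw [← add_one_mul]
        gcongr
        rw [← Nat.floor_div_eq_div (K := ℝ)]
        exact (Nat.lt_floor_add_one _).le
    _ ≤ log (n ! : ℕ) + log 4 * n := by
        rw [sum_add_distrib, ← Chebyshev.theta_eq_sum_primesLE_log]
        gcongr
        · exact sum_primesLE_div_mul_log_le_log_factorial n
        · exact Chebyshev.theta_le_log4_mul_x hn0.le
    _ ≤ log ((n ^ n : ℕ) : ℝ) + log 4 * n := by
        gcongr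
        exact_mod_cast Nat.factorial_le_pow n
    _ = n * (log n + log 4) := by push_cast; rw [log_pow]; ring

lemma mul_inv_sub_inv_le_log_sub_log {a b R : ℝ} (ha : 0 < a) (hab : a ≤ b) (hR : R ≤ a) :
    R * (a⁻¹ - b⁻¹) ≤ log b - log a := by
  have hb : 0 < b := ha.trans_le hab
  calc R * (a⁻¹ - b⁻¹) ≤ a * (a⁻¹ - b⁻¹) :=
        mul_le_mul_of_nonneg_right hR (sub_nonneg.2 (inv_anti₀ ha hab))
    _ = 1 - (b / a)⁻¹ := by field_simp
    _ ≤ log (b / a) := one_sub_inv_le_log_of_pos (by positivity)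
    _ = log b - log a := log_div hb.ne' ha.ne'

theorem exists_sum_range_le_log_log {w : ℕ → ℝ} {B : ℝ} {m : ℕ} (hm : 2 ≤ m)
    (hw : ∀ n, m ≤ n → ∑ k ∈ range (n + 1), w k * log k ≤ log n + B) :
    ∃ C, ∀ n, m ≤ n → ∑ k ∈ range (n + 1), w k ≤ log (log n) + C := by
  set S : ℕ → ℝ := fun n => ∑ k ∈ range (n + 1), w k
  set A : ℕ → ℝ := fun n => ∑ k ∈ range (n + 1), w k * log k
  -- Partial summation of `w k = (w k log k) / log k`: the invariant is that `S n - Φ n` decreases.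
  set Φ : ℕ → ℝ := fun n => log (log n) + (A n - B) / log n
  have hlog_pos : ∀ n, m ≤ n → 0 < log n := fun n hn =>
    log_pos (by exact_mod_cast (hm.trans hn : 2 ≤ n))
  have hstep : ∀ n, m ≤ n → S (n + 1) - Φ (n + 1) ≤ S n - Φ n := by
    intro n hn
    have ha := hlog_pos n hn
    have hb := hlog_pos (n + 1) (by omega)
    have hn0 : (0 : ℝ) < n := by exact_mod_cast (show 0 < n by omega)
    have hkey := mul_inv_sub_inv_le_log_sub_log (R := A n - B) (b := log ((n + 1 : ℕ) : ℝ)) ha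
      (log_le_log hn0 (by push_cast; linarith)) (by linarith [hw n hn])
    have hS : S (n + 1) = S n + w (n + 1) := sum_range_succ _ _
    have hA : A (n + 1) = A n + w (n + 1) * log ((n + 1 : ℕ) : ℝ) := sum_range_succ _ _
    simp only [Φ, hS, hA]
    field_simp at hkey ⊢
    nlinarith
  refine ⟨S m - Φ m + 1, fun n hn => ?_⟩
  have hmono : S n - Φ n ≤ S m - Φ m := by
    induction n, hn using Nat.le_induction with
    | base => exact le_rfl
    | succ n hn ih => exact (hstep n hn).trans ih
  have hΦ : Φ n ≤ log (log n) + 1 := by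
    have := hlog_pos n hn
    have : (A n - B) / log n ≤ 1 := (div_le_one this).2 (by linarith [hw n hn])
    simp only [Φ]; linarith
  change S n ≤ _
  linarith

theorem exists_sum_primesLE_inv_le_log_log :
    ∃ C, ∀ n : ℕ, 2 ≤ n → ∑ p ∈ n.primesLE, (p : ℝ)⁻¹ ≤ log (log n) + C := by
  have hsum : ∀ (f : ℕ → ℝ) n, ∑ p ∈ n.primesLE, f p
      = ∑ k ∈ range (n + 1), (if k.Prime then f k else 0) := fun f n => sum_filter _ _
  obtain ⟨C, hC⟩ := exists_sum_range_le_log_log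
    (w := fun k => if k.Prime then (k : ℝ)⁻¹ else 0) (B := log 4) le_rfl fun n hn => by
      simpa only [ite_mul, zero_mul, hsum, inv_mul_eq_div] using
        sum_primesLE_log_div_le (n := n) (by omega)
  exact ⟨C, fun n hn => hsum (fun p => (p : ℝ)⁻¹) n ▸ hC n hn⟩

lemma Nat.two_pow_card_primeFactors_le {q : ℕ} (hq : q ≠ 0) : 2 ^ #q.primeFactors ≤ q :=
  calc 2 ^ #q.primeFactors = ∏ _p ∈ q.primeFactors, 2 := (prod_const 2).symm
    _ ≤ ∏ p ∈ q.primeFactors, p :=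
      prod_le_prod' fun _p hp => (Nat.prime_of_mem_primeFactors hp).two_le
    _ ≤ q := Nat.le_of_dvd (Nat.pos_of_ne_zero hq) (Nat.prod_primeFactors_dvd q)

lemma one_le_log_exp_one_add {y : ℝ} (hy : 0 ≤ y) : 1 ≤ log (exp 1 + y) := by
  rw [le_log_iff_exp_le (by positivity)]
  linarith

theorem exists_sum_primeFactors_inv_le :
    ∃ C, ∀ q : ℕ, q ≠ 0 →
      ∑ p ∈ q.primeFactors, (p : ℝ)⁻¹ ≤ log (log (exp 1 + log q)) + C := by
  obtain ⟨C, hC⟩ := exists_sum_primesLE_inv_le_log_log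
  refine ⟨C + 2, fun q hq => ?_⟩
  set ω := #q.primeFactors
  set n := ω + 2
  have hn : (n : ℝ) = ω + 2 := by push_cast [n]; rfl
  have hn0 : (0 : ℝ) < n := by rw [hn]; positivity
  have hlogq : 0 ≤ log q := log_natCast_nonneg q
  set L := log (exp 1 + log q)
  have hL : 1 ≤ L := one_le_log_exp_one_add hlogq
  have hω : (ω : ℝ) ≤ 2 * log q := by
    have h2 : (1 / 2 : ℝ) < log 2 := by linarith [log_two_gt_d9]
    have : (ω : ℝ) * log 2 ≤ log q := by
      rw [← log_pow]
      exact log_le_log (by positivity) (by exact_mod_cast Nat.two_pow_card_primeFactors_le hq)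
    nlinarith [(Nat.cast_nonneg ω : (0 : ℝ) ≤ ω)]
  have hsmall : ∑ p ∈ q.primeFactors with p ≤ n, (p : ℝ)⁻¹ ≤ log (log n) + C := by
    refine le_trans (sum_le_sum_of_subset_of_nonneg ?_ fun _ _ _ => by positivity) (hC n (by omega))
    intro p hp
    rw [mem_filter] at hp
    exact Nat.mem_primesLE.mpr ⟨hp.2, Nat.prime_of_mem_primeFactors hp.1⟩
  have hlarge : ∑ p ∈ q.primeFactors with ¬p ≤ n, (p : ℝ)⁻¹ ≤ 1 :=
    calc ∑ p ∈ q.primeFactors with ¬p ≤ n, (p : ℝ)⁻¹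
        ≤ #{p ∈ q.primeFactors | ¬p ≤ n} • (n : ℝ)⁻¹ := by
          refine sum_le_card_nsmul _ _ _ fun p hp => ?_
          rw [mem_filter, not_le] at hp
          exact inv_anti₀ hn0 (by exact_mod_cast hp.2.le)
      _ ≤ ω • (n : ℝ)⁻¹ := by gcongr; exact card_filter_le _ _
      _ ≤ 1 := by
          rw [nsmul_eq_mul, ← div_eq_mul_inv, div_le_one hn0]
          exact_mod_cast (show ω ≤ n by omega)
  have hloglog : log (log n) ≤ log L + 1 := by
    have hlogn : 0 < log n := log_pos (by exact_mod_cast (show 1 < n by omega))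
    calc log (log n) ≤ log (2 * L) := by
          refine log_le_log hlogn ?_
          calc log n ≤ log (2 * (exp 1 + log q)) :=
                log_le_log hn0 (by rw [hn]; linarith [add_one_le_exp 1])
            _ = log 2 + L := log_mul (by norm_num) (by positivity)
            _ ≤ 2 * L := by linarith [log_two_lt_d9]
      _ = log 2 + log L := log_mul (by norm_num) (by positivity)
      _ ≤ log L + 1 := by linarith [log_two_lt_d9]
  rw [← sum_filter_add_sum_filter_not q.primeFactors (· ≤ n)]
  linarith

lemma Squarefree.sum_divisors_le_mul_exp {q : ℕ} (hq : Squarefree q) :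
    ∑ d ∈ q.divisors, (d : ℝ) ≤ q * exp (∑ p ∈ q.primeFactors, (p : ℝ)⁻¹) := by
  have hσ : ∑ d ∈ q.divisors, (d : ℝ) = ∏ p ∈ q.primeFactors, (1 + (p : ℝ)) := by
    rw [← Nat.cast_sum, Nat.sum_divisors hq.ne_zero, Nat.cast_prod]
    refine prod_congr rfl fun p hp => ?_
    obtain ⟨hp, hpq, hq0⟩ := Nat.mem_primeFactors.mp hp
    have : q.factorization p = 1 :=
      le_antisymm (hq.natFactorization_le_one p) (hp.factorization_pos_of_dvd hq0 hpq)
    simp [this, sum_range_succ]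
  calc ∑ d ∈ q.divisors, (d : ℝ) = ∏ p ∈ q.primeFactors, (1 + (p : ℝ)) := hσ
    _ ≤ ∏ p ∈ q.primeFactors, ((p : ℝ) * exp (p : ℝ)⁻¹) := by
        refine prod_le_prod (fun _ _ => by positivity) fun p hp => ?_
        have hp : (0 : ℝ) < p := by exact_mod_cast (Nat.prime_of_mem_primeFactors hp).pos
        calc 1 + (p : ℝ) = p * ((p : ℝ)⁻¹ + 1) := by field_simp
          _ ≤ p * exp (p : ℝ)⁻¹ := by gcongr; exact add_one_le_exp _
    _ = q * exp (∑ p ∈ q.primeFactors, (p : ℝ)⁻¹) := by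
        rw [prod_mul_distrib, ← exp_sum, ← Nat.cast_prod,
          Nat.prod_primeFactors_of_squarefree hq]

theorem exists_sum_divisors_le_mul_log_log :
    ∃ C, 0 < C ∧ ∀ q : ℕ, Squarefree q →
      ∑ d ∈ q.divisors, (d : ℝ) ≤ C * q * log (exp 1 + log q) := by
  obtain ⟨C, hC⟩ := exists_sum_primeFactors_inv_le
  refine ⟨exp C, exp_pos C, fun q hq => (hq.sum_divisors_le_mul_exp).trans ?_⟩
  have hL : 0 < log (exp 1 + log q) :=
    one_pos.trans_le (one_le_log_exp_one_add (log_natCast_nonneg q))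
  calc (q : ℝ) * exp (∑ p ∈ q.primeFactors, (p : ℝ)⁻¹)
      ≤ q * exp (log (log (exp 1 + log q)) + C) := by gcongr; exact hC q hq.ne_zero
    _ = exp C * q * log (exp 1 + log q) := by rw [exp_add, exp_log hL]; ring

lemma log_mul_mul_log_two_mul_le {a b x : ℝ} (ha : 0 < a) (hab : a ≤ b) (hx : 2 ≤ x) :
    log (b * x) * log (2 * a) ≤ log (2 * b) * log (a * x) := by
  have hb : 0 < b := ha.trans_le hab
  rw [log_mul hb.ne' (by positivity), log_mul two_ne_zero ha.ne', log_mul two_ne_zero hb.ne',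
    log_mul ha.ne' (by positivity)]
  have hab' := log_le_log ha hab
  have hx' := log_le_log two_pos hx
  nlinarith [mul_nonneg (sub_nonneg.mpr hab') (sub_nonneg.mpr hx')]

lemma div_log_mul_rpow_le {d q x s : ℝ} (hd : 1 ≤ d) (hdq : d ≤ q) (hx : 2 ≤ x)
    (hs0 : 0 ≤ s) (hs2 : s ≤ 2) :
    d / log (d * x) ^ s ≤ d * (log (2 * q) / log (2 * d)) ^ 2 / log (q * x) ^ s := by
  have hlog2d : 0 < log (2 * d) := log_pos (by linarith)
  have hlogdx : 0 < log (d * x) := log_pos (by nlinarith)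
  have hlogqx : 0 < log (q * x) := log_pos (by nlinarith)
  set r := log (2 * q) / log (2 * d)
  have hr : 1 ≤ r := (one_le_div hlog2d).2 (log_le_log (by linarith) (by linarith))
  have hqx : log (q * x) ≤ r * log (d * x) := by
    rw [div_mul_eq_mul_div, le_div_iff₀ hlog2d]
    exact log_mul_mul_log_two_mul_le (by linarith) hdq hx
  have hpow : log (q * x) ^ s ≤ r ^ 2 * log (d * x) ^ s :=
    calc log (q * x) ^ s ≤ (r * log (d * x)) ^ s := rpow_le_rpow hlogqx.le hqx hs0
      _ = r ^ s * log (d * x) ^ s := mul_rpow (by linarith) hlogdx.le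
      _ ≤ r ^ (2 : ℝ) * log (d * x) ^ s := by gcongr
      _ = r ^ 2 * log (d * x) ^ s := by rw [rpow_two]
  calc d / log (d * x) ^ s = d * r ^ 2 / (r ^ 2 * log (d * x) ^ s) := by
        field_simp
    _ ≤ d * r ^ 2 / log (q * x) ^ s :=
        div_le_div_of_nonneg_left (by positivity) (by positivity) hpow

lemma mul_sq_log_div_log_le {d q : ℝ} (hd : 1 ≤ d) (hq : 1 ≤ q) :
    d * (log (2 * q) / log (2 * d)) ^ 2 ≤ 16 * d + 28 * q / d := by
  have hlog2d : 1 / 2 < log (2 * d) := by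
    linarith [log_two_gt_d9, log_le_log two_pos (by linarith : (2 : ℝ) ≤ 2 * d)]
  have hlog2q : 0 ≤ log (2 * q) := log_nonneg (by linarith)
  set r := log (2 * q) / log (2 * d)
  have hr0 : 0 ≤ r := div_nonneg hlog2q (by linarith)
  have hqd : 0 ≤ 28 * q / d := by positivity
  rcases le_or_gt q (d ^ 4) with hbig | hsmall
  · have hr : r ≤ 4 := by
      rw [div_le_iff₀ (by linarith)]
      calc log (2 * q) ≤ log ((2 * d) ^ 4) := log_le_log (by linarith) (by nlinarith)
        _ = 4 * log (2 * d) := by rw [log_pow]; norm_num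
    nlinarith [pow_le_pow_left₀ hr0 hr 2]
  · have hr : r ≤ 2 * log (2 * q) := by
      rw [div_le_iff₀ (by linarith)]
      nlinarith
    have hlog4 : log (2 * q) ^ 4 ≤ 48 * q := by
      have := pow_div_factorial_le_exp _ hlog2q 4
      rw [exp_log (by linarith)] at this
      norm_num [Nat.factorial] at this
      linarith
    have hX : d ^ 2 * log (2 * q) ^ 2 ≤ 7 * q := by
      nlinarith [mul_le_mul hsmall.le hlog4 (by positivity) (by positivity)]
    calc d * r ^ 2 ≤ d * (2 * log (2 * q)) ^ 2 := by gcongr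
      _ = 4 * (d ^ 2 * log (2 * q) ^ 2) / d := by field_simp; ring
      _ ≤ 4 * (7 * q) / d := by gcongr
      _ ≤ 16 * d + 28 * q / d := by linarith [show 4 * (7 * q) / d = 28 * q / d by ring]

lemma sum_divisors_mul_sq_log_div_log_le {q : ℕ} (hq : q ≠ 0) :
    ∑ d ∈ q.divisors, (d : ℝ) * (log (2 * q) / log (2 * d)) ^ 2
      ≤ 44 * ∑ d ∈ q.divisors, (d : ℝ) := by
  have hq1 : (1 : ℝ) ≤ q := by exact_mod_cast Nat.one_le_iff_ne_zero.mpr hq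
  calc ∑ d ∈ q.divisors, (d : ℝ) * (log (2 * q) / log (2 * d)) ^ 2
      ≤ ∑ d ∈ q.divisors, (16 * (d : ℝ) + 28 * q / d) :=
        sum_le_sum fun d hd =>
          mul_sq_log_div_log_le (by exact_mod_cast Nat.pos_of_mem_divisors hd) hq1
    _ = 16 * ∑ d ∈ q.divisors, (d : ℝ)
          + 28 * ∑ d ∈ q.divisors, ((q / d : ℕ) : ℝ) := by
        rw [sum_add_distrib, mul_sum, mul_sum]
        congr! 2 with d hd
        rw [Nat.cast_div (Nat.dvd_of_mem_divisors hd)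
          (by exact_mod_cast (Nat.pos_of_mem_divisors hd).ne'), mul_div_assoc]
    _ = 44 * ∑ d ∈ q.divisors, (d : ℝ) := by
        rw [Nat.sum_div_divisors q (fun d => (d : ℝ))]; ring

/-- For squarefree `q`, `∑_{d ∣ q} d / log(dx)^{2-ε} ≪ q loglog(e^e q) / log(qx)^{2-ε}`
with an absolute implied constant. -/
theorem stmt5 :
    ∃ K : ℝ, 0 < K ∧ ∀ (x ε : ℝ) (q : ℕ), 2 ≤ x → ε ∈ Set.Ioo (0 : ℝ) 1 → 0 < q →
      Squarefree q →
      ∑ d ∈ q.divisors, (d : ℝ) / (Real.log ((d : ℝ) * x)) ^ (2 - ε)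
        ≤ K * q * Real.log (Real.log (Real.exp (Real.exp 1) * q))
            / (Real.log ((q : ℝ) * x)) ^ (2 - ε) := by
  obtain ⟨C, hC0, hC⟩ := exists_sum_divisors_le_mul_log_log
  refine ⟨44 * C, by positivity, fun x ε q hx ⟨hε0, hε1⟩ hq hsq => ?_⟩
  have hq1 : (1 : ℝ) ≤ q := by exact_mod_cast hq
  have hD : 0 < log (q * x) ^ (2 - ε) := rpow_pos_of_pos (log_pos (by nlinarith)) _
  rw [log_mul (exp_ne_zero _) (by positivity), log_exp]
  calc ∑ d ∈ q.divisors, (d : ℝ) / log (d * x) ^ (2 - ε)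
      ≤ (∑ d ∈ q.divisors, (d : ℝ) * (log (2 * q) / log (2 * d)) ^ 2)
          / log (q * x) ^ (2 - ε) := by
        rw [sum_div]
        exact sum_le_sum fun d hd => div_log_mul_rpow_le
          (by exact_mod_cast Nat.pos_of_mem_divisors hd)
          (by exact_mod_cast Nat.divisor_le hd) hx (by linarith) (by linarith)
    _ ≤ 44 * C * q * log (exp 1 + log q) / log (q * x) ^ (2 - ε) := by
        gcongr
        calc _ ≤ 44 * ∑ d ∈ q.divisors, (d : ℝ) := sum_divisors_mul_sq_log_div_log_le hq.ne'
          _ ≤ 44 * (C * q * log (exp 1 + log q)) := by gcongr; exact hC q hsq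
          _ = 44 * C * q * log (exp 1 + log q) := by ring
end

section
/- Let x ≥ 2, ε ∈ (0,1), and q a positive integer. Then ∑_{c ∣ q} (q/gcd(c²,q)) · φ(gcd(c, q/c)) / (log((q/gcd(c²,q))·x))^{2-ε} ≤ K · q · (log log(e^e q))^{K} / (log(q·x))^{2-ε} for some absolute constant K. -/
set_option maxHeartbeats 1000000
open Finset Real

/-- harmonic sum bound -/
lemma aux_harmonic (K : ℕ) (hK : 1 ≤ K) :
    ∑ k ∈ Finset.Icc 1 K, (1:ℝ)/k ≤ 1 + Real.log K := by
  induction K with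
  | zero => omega
  | succ n ih =>
    rcases Nat.lt_or_ge 1 (n+1) with h | h
    · have hn : 1 ≤ n := by omega
      have hsum := ih hn
      rw [Finset.sum_Icc_succ_top (by omega : 1 ≤ n+1)]
      have hlog : Real.log ((n:ℝ)/(n+1)) ≤ (n:ℝ)/(n+1) - 1 :=
        Real.log_le_sub_one_of_pos (by positivity)
      rw [Real.log_div (by positivity) (by positivity)] at hlog
      have h1 : (n:ℝ)/(n+1) - 1 = -(1/((n:ℕ)+1)) := by
        field_simp
        ring
      have hcast : ((n+1:ℕ):ℝ) = (n:ℝ)+1 := by push_cast; ring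
      rw [hcast]
      have : (1:ℝ)/((n:ℝ)+1) ≤ Real.log ((n:ℝ)+1) - Real.log n := by
        rw [h1] at hlog; linarith
      calc ∑ k ∈ Finset.Icc 1 n, (1:ℝ)/k + 1/((n:ℝ)+1)
          ≤ (1 + Real.log n) + (Real.log ((n:ℝ)+1) - Real.log n) := by
            linarith
        _ = 1 + Real.log ((n:ℝ)+1) := by ring
    · have : n = 0 := by omega
      subst this
      norm_num

/-- Chebyshev-type block count: primes in `[2^k, 2^(k+1))`. -/
lemma aux_block_card (k : ℕ) :
    k * ((Finset.Ico (2^k) (2^(k+1))).filter Nat.Prime).card ≤ 2^(k+2) := by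
  set B := (Finset.Ico (2^k) (2^(k+1))).filter Nat.Prime with hB
  have h1 : (2^k : ℕ)^(B.card) ≤ ∏ p ∈ B, p := by
    apply Finset.pow_card_le_prod
    intro p hp
    rw [hB, Finset.mem_filter, Finset.mem_Ico] at hp
    exact hp.1.1
  have h2 : ∏ p ∈ B, p ≤ primorial (2^(k+1)) := by
    unfold primorial
    apply Finset.prod_le_prod_of_subset_of_one_le'
    · intro p hp
      rw [hB, Finset.mem_filter, Finset.mem_Ico] at hp
      rw [Finset.mem_filter, Finset.mem_range]
      exact ⟨by omega, hp.2⟩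
    · intro i hi _
      rw [Finset.mem_filter] at hi
      exact hi.2.one_lt.le
  have h3 : primorial (2^(k+1)) ≤ 4 ^ (2^(k+1)) := primorial_le_4_pow _
  have h4 : (4:ℕ) ^ (2^(k+1)) = 2 ^ (2^(k+2)) := by
    have : (4:ℕ) = 2^2 := by norm_num
    rw [this, ← pow_mul]
    ring_nf
  have h5 : (2:ℕ) ^ (k * B.card) ≤ 2 ^ (2^(k+2)) := by
    rw [pow_mul]
    omega
  exact (Nat.pow_le_pow_iff_right (by norm_num : 1 < 2)).mp h5

/-- Chebyshev: sum of reciprocals of primes up to N. -/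
lemma aux_cheb (N : ℕ) (hN : 2 ≤ N) :
    ∑ p ∈ (Finset.range (N+1)).filter Nat.Prime, (1:ℝ)/p
      ≤ 5 + 4 * Real.log (Nat.log 2 N) := by
  set K := Nat.log 2 N with hK
  have hK1 : 1 ≤ K := by
    rw [hK]
    exact Nat.le_log_of_pow_le (by norm_num) (by omega)
  -- subset of union of dyadic blocks
  have hsub : (Finset.range (N+1)).filter Nat.Prime ⊆
      (Finset.Icc 1 K).biUnion (fun k => (Finset.Ico (2^k) (2^(k+1))).filter Nat.Prime) := by
    intro p hp
    rw [Finset.mem_filter, Finset.mem_range] at hp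
    obtain ⟨hpN, hpp⟩ := hp
    have hp0 : p ≠ 0 := hpp.pos.ne'
    set k := Nat.log 2 p with hk
    have h1 : 2^k ≤ p := Nat.pow_log_le_self 2 hp0
    have h2 : p < 2^(k+1) := Nat.lt_pow_succ_log_self (by norm_num) p
    have hk1 : 1 ≤ k := Nat.le_log_of_pow_le (by norm_num) (by simpa using hpp.two_le)
    have hkK : k ≤ K := Nat.log_mono_right (by omega)
    rw [Finset.mem_biUnion]
    exact ⟨k, Finset.mem_Icc.mpr ⟨hk1, hkK⟩,
      Finset.mem_filter.mpr ⟨Finset.mem_Ico.mpr ⟨h1, h2⟩, hpp⟩⟩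
  have hnonneg : ∀ p ∈ (Finset.Icc 1 K).biUnion
      (fun k => (Finset.Ico (2^k) (2^(k+1))).filter Nat.Prime), (0:ℝ) ≤ 1/p := by
    intro p _; positivity
  have hdisj : (↑(Finset.Icc 1 K) : Set ℕ).PairwiseDisjoint
      (fun k => (Finset.Ico (2^k) (2^(k+1))).filter Nat.Prime) := by
    intro a _ b _ hab
    apply Finset.disjoint_left.mpr
    intro p hpa hpb
    rw [Finset.mem_filter, Finset.mem_Ico] at hpa hpb
    rcases Nat.lt_or_ge a b with h | h
    · have : a + 1 ≤ b := h
      have := Nat.pow_le_pow_right (by norm_num : 1 ≤ 2) this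
      omega
    · have hba : b < a := by omega
      have : b + 1 ≤ a := hba
      have := Nat.pow_le_pow_right (by norm_num : 1 ≤ 2) this
      omega
  calc ∑ p ∈ (Finset.range (N+1)).filter Nat.Prime, (1:ℝ)/p
      ≤ ∑ p ∈ (Finset.Icc 1 K).biUnion
          (fun k => (Finset.Ico (2^k) (2^(k+1))).filter Nat.Prime), (1:ℝ)/p :=
        Finset.sum_le_sum_of_subset_of_nonneg hsub (fun i hi _ => hnonneg i hi)
    _ = ∑ k ∈ Finset.Icc 1 K, ∑ p ∈ (Finset.Ico (2^k) (2^(k+1))).filter Nat.Prime, (1:ℝ)/p :=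
        Finset.sum_biUnion hdisj
    _ ≤ ∑ k ∈ Finset.Icc 1 K, 4/(k:ℝ) := by
        apply Finset.sum_le_sum
        intro k hk
        rw [Finset.mem_Icc] at hk
        set B := (Finset.Ico (2^k) (2^(k+1))).filter Nat.Prime with hB
        have hcard : k * B.card ≤ 2^(k+2) := aux_block_card k
        have hterm : ∀ p ∈ B, (1:ℝ)/p ≤ (1:ℝ)/(2^k) := by
          intro p hp
          rw [hB, Finset.mem_filter, Finset.mem_Ico] at hp
          apply one_div_le_one_div_of_le (by positivity)
          exact_mod_cast hp.1.1
        calc ∑ p ∈ B, (1:ℝ)/p ≤ B.card • ((1:ℝ)/(2^k)) :=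
              Finset.sum_le_card_nsmul _ _ _ hterm
          _ = (B.card : ℝ)/(2^k) := by
              rw [nsmul_eq_mul]; ring
          _ ≤ 4/(k:ℝ) := by
              rw [div_le_div_iff₀ (by positivity) (by exact_mod_cast hk.1)]
              have : (k:ℝ) * B.card ≤ 2^(k+2) := by exact_mod_cast hcard
              have h4 : ((2:ℝ))^(k+2) = 4 * 2^k := by ring
              nlinarith [pow_pos (by norm_num : (0:ℝ) < 2) k]
    _ = 4 * ∑ k ∈ Finset.Icc 1 K, (1:ℝ)/k := by
        rw [Finset.mul_sum]
        apply Finset.sum_congr rfl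
        intro k _; ring
    _ ≤ 4 * (1 + Real.log K) := by
        have := aux_harmonic K hK1
        linarith
    _ ≤ 5 + 4 * Real.log K := by linarith

/-- `(1-t)⁻¹ ≤ exp (3.5 t)` for `0 ≤ t ≤ 5/7`. -/
lemma aux_factor (t : ℝ) (h0 : 0 ≤ t) (h1 : t ≤ 5/7) : (1-t)⁻¹ ≤ Real.exp (3.5 * t) := by
  have ht : 0 < 1 - t := by linarith
  rw [inv_le_iff_one_le_mul₀ ht]  -- maybe wrong name
  have hexp : 3.5*t + 1 ≤ Real.exp (3.5*t) := Real.add_one_le_exp _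
  nlinarith

/-- prime rpow bound -/
lemma aux_prime_rpow (s : ℝ) (hs : s ≤ -(1/2)) (p : ℕ) (hp : 2 ≤ p) : (p:ℝ)^s ≤ 5/7 := by
  have h2 : (p:ℝ)^s ≤ (2:ℝ)^s := by
    have e1 : (p:ℝ)^s = ((p:ℝ)^(-s))⁻¹ := by
      rw [← Real.rpow_neg (by positivity), neg_neg]
    have e2 : (2:ℝ)^s = ((2:ℝ)^(-s))⁻¹ := by
      rw [← Real.rpow_neg (by norm_num), neg_neg]
    rw [e1, e2]
    apply inv_anti₀ (by positivity)
    exact Real.rpow_le_rpow (by norm_num) (by exact_mod_cast hp) (by linarith)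
  have h3 : (2:ℝ)^s ≤ (2:ℝ)^(-(1/2):ℝ) := Real.rpow_le_rpow_of_exponent_le (by norm_num) hs
  have h4 : (2:ℝ)^(-(1/2):ℝ) ≤ 5/7 := by
    have e3 : (2:ℝ)^(-(1/2):ℝ) = (Real.sqrt 2)⁻¹ := by
      rw [Real.rpow_neg (by norm_num), Real.sqrt_eq_rpow]
    rw [e3]
    have h75 : (7/5:ℝ) ≤ Real.sqrt 2 := by
      have h := Real.sq_sqrt (by norm_num : (0:ℝ) ≤ 2)
      nlinarith [Real.sqrt_nonneg 2]
    have := inv_anti₀ (show (0:ℝ) < 7/5 by norm_num) h75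
    calc (Real.sqrt 2)⁻¹ ≤ ((7:ℝ)/5)⁻¹ := this
      _ = 5/7 := by norm_num
  linarith

lemma aux_geom (r : ℝ) (h0 : 0 ≤ r) (h1 : r ≤ 5/7) (n : ℕ) :
    ∑ j ∈ Finset.range n, r^j ≤ (1-r)⁻¹ := by
  have hr1 : r < 1 := by linarith
  have hne : r ≠ 1 := by linarith
  rw [geom_sum_eq hne]
  have he : (r^n - 1)/(r - 1) = (1 - r^n)/(1 - r) := by
    rw [show r^n - 1 = -(1 - r^n) by ring, show r - 1 = -(1-r) by ring, neg_div_neg_eq]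
  rw [he, inv_eq_one_div, div_le_div_iff₀ (by linarith) (by linarith)]
  nlinarith [pow_nonneg h0 n]

lemma aux_sum_divisors_rpow (q : ℕ) (hq : q ≠ 0) (s : ℝ) (hs : s ≤ -(1/2)) :
    ∑ c ∈ q.divisors, (c:ℝ)^s ≤ ∏ p ∈ q.primeFactors, (1 - (p:ℝ)^s)⁻¹ := by
  classical
  set g : ArithmeticFunction ℝ := ⟨fun n => if n = 0 then 0 else (n:ℝ)^s, by simp⟩ with hgdef
  have hgapp : ∀ n : ℕ, n ≠ 0 → g n = (n:ℝ)^s := by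
    intro n hn
    show (if n = 0 then (0:ℝ) else (n:ℝ)^s) = (n:ℝ)^s
    rw [if_neg hn]
  have hg : g.IsMultiplicative := by
    constructor
    · rw [hgapp 1 one_ne_zero]; norm_num
    · intro m n _
      rcases eq_or_ne m 0 with rfl | hm
      · rw [zero_mul, ArithmeticFunction.map_zero, zero_mul]
      rcases eq_or_ne n 0 with rfl | hn
      · rw [mul_zero, ArithmeticFunction.map_zero, mul_zero]
      rw [hgapp _ (mul_ne_zero hm hn), hgapp _ hm, hgapp _ hn]
      push_cast
      exact Real.mul_rpow (by positivity) (by positivity)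
  set F : ArithmeticFunction ℝ := g * (↑ArithmeticFunction.zeta : ArithmeticFunction ℝ) with hFdef
  have hFm : F.IsMultiplicative := hg.mul ArithmeticFunction.isMultiplicative_zeta.natCast
  have hFsum : ∀ m : ℕ, F m = ∑ c ∈ m.divisors, g c := by
    intro m
    rw [hFdef]
    exact ArithmeticFunction.coe_mul_zeta_apply
  have h1 : ∑ c ∈ q.divisors, (c:ℝ)^s = F q := by
    rw [hFsum q]
    apply Finset.sum_congr rfl
    intro c hc
    rw [hgapp c (Nat.pos_of_mem_divisors hc).ne']
  have h2 := hFm.multiplicative_factorization F hq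
  rw [h1, h2]
  have hg0 : ∀ c : ℕ, 0 ≤ g c := by
    intro c
    show (0:ℝ) ≤ if c = 0 then (0:ℝ) else (c:ℝ)^s
    split
    · exact le_refl 0
    · positivity
  calc (q.factorization.prod fun p k => F (p^k))
      = ∏ p ∈ q.primeFactors, F (p^(q.factorization p)) := by
        rw [Finsupp.prod, Nat.support_factorization]
    _ ≤ ∏ p ∈ q.primeFactors, (1-(p:ℝ)^s)⁻¹ := by
        apply Finset.prod_le_prod
        · intro p _
          rw [hFsum]
          exact Finset.sum_nonneg fun c _ => hg0 c
        · intro p hp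
          have hpp : p.Prime := Nat.prime_of_mem_primeFactors hp
          have hp0' : (0:ℝ) ≤ (p:ℝ) := by positivity
          have hr0 : 0 ≤ (p:ℝ)^s := Real.rpow_nonneg hp0' s
          have hr1 : (p:ℝ)^s ≤ 5/7 := aux_prime_rpow s hs p hpp.two_le
          rw [hFsum, Nat.sum_divisors_prime_pow hpp]
          have hterm : ∀ j : ℕ, g (p^j) = ((p:ℝ)^s)^j := by
            intro j
            rw [hgapp _ (pow_ne_zero j hpp.pos.ne')]
            push_cast
            rw [← Real.rpow_natCast ((p:ℝ)^s) j, ← Real.rpow_natCast (p:ℝ) j,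
              ← Real.rpow_mul hp0', ← Real.rpow_mul hp0', mul_comm]
          calc ∑ j ∈ Finset.range (q.factorization p + 1), g (p^j)
              = ∑ j ∈ Finset.range (q.factorization p + 1), ((p:ℝ)^s)^j := by
                exact Finset.sum_congr rfl fun j _ => hterm j
            _ ≤ (1 - (p:ℝ)^s)⁻¹ := aux_geom _ hr0 hr1 _

lemma aux_rpow_anti {a b t : ℝ} (ha : 0 < a) (hab : a ≤ b) (ht : t ≤ 0) : b^t ≤ a^t := by
  have hb : 0 < b := lt_of_lt_of_le ha hab
  have e1 : a^t = (a^(-t))⁻¹ := by rw [← Real.rpow_neg ha.le, neg_neg]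
  have e2 : b^t = (b^(-t))⁻¹ := by rw [← Real.rpow_neg hb.le, neg_neg]
  rw [e1, e2]
  exact inv_anti₀ (Real.rpow_pos_of_pos ha _) (Real.rpow_le_rpow ha.le hab (by linarith))

lemma aux_P (q : ℕ) (hq : 0 < q) (L0 LL d : ℝ)
    (hL0 : L0 = Real.exp 1 + Real.log q) (hLL : LL = Real.log L0) (hd : d = 1/(2*LL)) :
    ∑ p ∈ q.primeFactors, (p:ℝ)^(d-1) ≤ 98 + 30 * Real.log LL := by
  classical
  have hq1 : (1:ℝ) ≤ (q:ℝ) := by exact_mod_cast hq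
  have hlogq : 0 ≤ Real.log q := Real.log_nonneg hq1
  have hL0e : Real.exp 1 ≤ L0 := by rw [hL0]; linarith
  have hexp1 : (2.7182818283:ℝ) < Real.exp 1 := Real.exp_one_gt_d9
  have hL0pos : 0 < L0 := by linarith
  have hLL1 : 1 ≤ LL := by
    rw [hLL, ← Real.log_exp 1]
    exact Real.log_le_log (Real.exp_pos 1) hL0e
  have hLLpos : 0 < LL := by linarith
  have hlogLL : 0 ≤ Real.log LL := Real.log_nonneg hLL1
  have hd0 : 0 < d := by rw [hd]; positivity
  have hd2 : d ≤ 1/2 := by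
    rw [hd]
    rw [div_le_div_iff₀ (by linarith) (by norm_num)]
    linarith
  set T : ℝ := L0^(3:ℝ) with hT
  have hTpos : 0 < T := Real.rpow_pos_of_pos hL0pos _
  have hlogT : Real.log T = 3*LL := by rw [hT, Real.log_rpow hL0pos, hLL]
  have hL0T : L0 ≤ T := by
    calc L0 = L0^(1:ℝ) := (Real.rpow_one L0).symm
      _ ≤ L0^(3:ℝ) := Real.rpow_le_rpow_of_exponent_le (by linarith) (by norm_num)
  have hT2 : 2 ≤ T := by linarith
  set N : ℕ := ⌊T⌋₊ with hN
  have hN2 : 2 ≤ N := Nat.le_floor (by exact_mod_cast hT2)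
  have hNT : (N:ℝ) ≤ T := Nat.floor_le hTpos.le
  have hTN1 : T < N + 1 := Nat.lt_floor_add_one T
  -- exponent: T^d = exp (3/2)
  have hTd : T^d = Real.exp (3/2) := by
    rw [hT, ← Real.rpow_mul hL0pos.le, Real.rpow_def_of_pos hL0pos, ← hLL, hd]
    congr 1
    field_simp
  have hTdle : T^d ≤ 7.4 := by
    rw [hTd]
    have h1 : Real.exp (3/2) ≤ Real.exp 2 := Real.exp_le_exp.mpr (by norm_num)
    have h2 : Real.exp 2 = Real.exp 1 * Real.exp 1 := by
      rw [← Real.exp_add]; norm_num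
    have h3 : Real.exp 1 < 2.7182818286 := Real.exp_one_lt_d9
    nlinarith [Real.exp_pos 1]
  -- split
  rw [← Finset.sum_filter_add_sum_filter_not q.primeFactors (fun p => p ≤ N)]
  have hhead : ∑ p ∈ q.primeFactors.filter (fun p => p ≤ N), (p:ℝ)^(d-1)
      ≤ 97 + 30 * Real.log LL := by
    have hstep : ∑ p ∈ q.primeFactors.filter (fun p => p ≤ N), (p:ℝ)^(d-1)
        ≤ ∑ p ∈ q.primeFactors.filter (fun p => p ≤ N), 7.4 * (1/(p:ℝ)) := by
      apply Finset.sum_le_sum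
      intro p hp
      rw [Finset.mem_filter] at hp
      have hpp := Nat.prime_of_mem_primeFactors hp.1
      have hppos : (0:ℝ) < p := by exact_mod_cast hpp.pos
      have e1 : (p:ℝ)^(d-1) = (p:ℝ)^d * (p:ℝ)⁻¹ := by
        rw [Real.rpow_sub hppos, Real.rpow_one, div_eq_mul_inv]
      rw [e1]
      have h2 : (p:ℝ)^d ≤ T^d := by
        apply Real.rpow_le_rpow hppos.le _ hd0.le
        calc (p:ℝ) ≤ N := by exact_mod_cast hp.2
          _ ≤ T := hNT
      have h3 : (0:ℝ) ≤ (p:ℝ)⁻¹ := by positivity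
      calc (p:ℝ)^d * (p:ℝ)⁻¹ ≤ 7.4 * (p:ℝ)⁻¹ := by
            apply mul_le_mul_of_nonneg_right _ h3
            linarith
        _ = 7.4 * (1/(p:ℝ)) := by rw [one_div]
    have hsub : ∑ p ∈ q.primeFactors.filter (fun p => p ≤ N), 7.4 * (1/(p:ℝ))
        ≤ 7.4 * ∑ p ∈ (Finset.range (N+1)).filter Nat.Prime, (1:ℝ)/p := by
      rw [← Finset.mul_sum]
      apply mul_le_mul_of_nonneg_left _ (by norm_num)
      apply Finset.sum_le_sum_of_subset_of_nonneg
      · intro p hp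
        rw [Finset.mem_filter] at hp ⊢
        refine ⟨Finset.mem_range.mpr ?_, Nat.prime_of_mem_primeFactors hp.1⟩
        have h := hp.2
        omega
      · intro p _ _
        positivity
    have hcheb := aux_cheb N hN2
    -- bound log (Nat.log 2 N)
    have hK1 : 1 ≤ Nat.log 2 N := Nat.le_log_of_pow_le (by norm_num) (by omega)
    have hKbound : (Nat.log 2 N : ℝ) ≤ 4.5 * LL := by
      have h1 : (2:ℕ)^(Nat.log 2 N) ≤ N := Nat.pow_log_le_self 2 (by omega)
      have h2 : ((2:ℝ))^((Nat.log 2 N : ℕ):ℕ) ≤ (N:ℝ) := by exact_mod_cast h1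
      have h3 : (Nat.log 2 N : ℝ) * Real.log 2 ≤ Real.log N := by
        rw [← Real.log_pow]
        exact Real.log_le_log (by positivity) h2
      have h4 : Real.log N ≤ Real.log T := Real.log_le_log (by positivity) hNT
      have hlog2 : (0.6931471803:ℝ) < Real.log 2 := Real.log_two_gt_d9
      rw [hlogT] at h4
      have hc0 : (0:ℝ) ≤ (Nat.log 2 N : ℝ) := Nat.cast_nonneg _
      linarith [mul_le_mul_of_nonneg_left hlog2.le hc0]
    have hlogK : Real.log (Nat.log 2 N) ≤ 2 + Real.log LL := by
      have h1 : Real.log (Nat.log 2 N) ≤ Real.log (4.5 * LL) := by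
        apply Real.log_le_log (by exact_mod_cast hK1) hKbound
      have h2 : Real.log (4.5 * LL) = Real.log 4.5 + Real.log LL := by
        rw [Real.log_mul (by norm_num) (by linarith)]
      have h3 : Real.log 4.5 ≤ 2 := by
        rw [show (4.5:ℝ) = 4.5 from rfl]
        have : (4.5:ℝ) ≤ Real.exp 2 := by
          have h2e : Real.exp 2 = Real.exp 1 * Real.exp 1 := by
            rw [← Real.exp_add]; norm_num
          nlinarith
        calc Real.log 4.5 ≤ Real.log (Real.exp 2) := Real.log_le_log (by norm_num) this
          _ = 2 := Real.log_exp 2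
      linarith
    calc ∑ p ∈ q.primeFactors.filter (fun p => p ≤ N), (p:ℝ)^(d-1)
        ≤ 7.4 * ∑ p ∈ (Finset.range (N+1)).filter Nat.Prime, (1:ℝ)/p := le_trans hstep hsub
      _ ≤ 7.4 * (5 + 4 * Real.log (Nat.log 2 N)) := by
          apply mul_le_mul_of_nonneg_left hcheb (by norm_num)
      _ ≤ 7.4 * (5 + 4 * (2 + Real.log LL)) := by
          apply mul_le_mul_of_nonneg_left _ (by norm_num)
          linarith
      _ ≤ 97 + 30 * Real.log LL := by ring_nf; linarith
  have htail : ∑ p ∈ q.primeFactors.filter (fun p => ¬ p ≤ N), (p:ℝ)^(d-1) ≤ 1 := by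
    have hbound : ∀ p ∈ q.primeFactors.filter (fun p => ¬ p ≤ N), (p:ℝ)^(d-1) ≤ (1.5*L0)⁻¹ := by
      intro p hp
      rw [Finset.mem_filter] at hp
      have hpT : T ≤ (p:ℝ) := by
        have : N + 1 ≤ p := by omega
        have : ((N:ℝ) + 1) ≤ (p:ℝ) := by exact_mod_cast this
        linarith
      have h1 : (p:ℝ)^(d-1) ≤ T^(d-1) := aux_rpow_anti hTpos hpT (by linarith)
      have h2 : T^(d-1) = Real.exp ((3*LL)*(d-1)) := by
        rw [Real.rpow_def_of_pos hTpos, hlogT]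
      have h3 : (3*LL)*(d-1) = 3/2 - 3*LL := by
        rw [hd]; field_simp
      have hL0exp : L0 = Real.exp LL := by rw [hLL, Real.exp_log hL0pos]
      have h4 : Real.exp (3/2 - 3*LL) ≤ (1.5*L0)⁻¹ := by
        rw [hL0exp]
        rw [show (3/2 - 3*LL) = -(3*LL - 3/2) by ring, Real.exp_neg]
        apply inv_anti₀ (by positivity)
        have he15 : (1.5:ℝ) ≤ Real.exp (1/2) := by
          have := Real.add_one_le_exp (1/2:ℝ)
          linarith
        calc 1.5 * Real.exp LL ≤ Real.exp (1/2) * Real.exp LL := by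
              nlinarith [Real.exp_pos LL]
          _ = Real.exp (1/2 + LL) := (Real.exp_add _ _).symm
          _ ≤ Real.exp (3*LL - 3/2) := Real.exp_le_exp.mpr (by linarith)
      calc (p:ℝ)^(d-1) ≤ T^(d-1) := h1
        _ = Real.exp (3/2 - 3*LL) := by rw [h2, h3]
        _ ≤ (1.5*L0)⁻¹ := h4
    have homega : (q.primeFactors.card : ℝ) ≤ 1.5 * L0 := by
      have h1 : (2:ℕ)^(q.primeFactors.card) ≤ ∏ p ∈ q.primeFactors, p :=
        Finset.pow_card_le_prod _ _ _ (fun p hp => (Nat.prime_of_mem_primeFactors hp).two_le)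
      have h2 : ∏ p ∈ q.primeFactors, p ≤ q :=
        Nat.le_of_dvd hq (Nat.prod_primeFactors_dvd q)
      have h3 : ((2:ℝ))^(q.primeFactors.card) ≤ (q:ℝ) := by exact_mod_cast le_trans h1 h2
      have h4 : (q.primeFactors.card : ℝ) * Real.log 2 ≤ Real.log q := by
        rw [← Real.log_pow]
        exact Real.log_le_log (by positivity) h3
      have hlog2 : (0.6931471803:ℝ) < Real.log 2 := Real.log_two_gt_d9
      have h5 : Real.log q ≤ L0 := by rw [hL0]; linarith [Real.exp_pos 1]
      have hc0 : (0:ℝ) ≤ (q.primeFactors.card : ℝ) := Nat.cast_nonneg _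
      linarith [mul_le_mul_of_nonneg_left hlog2.le hc0]
    calc ∑ p ∈ q.primeFactors.filter (fun p => ¬ p ≤ N), (p:ℝ)^(d-1)
        ≤ (q.primeFactors.filter (fun p => ¬ p ≤ N)).card • (1.5*L0)⁻¹ :=
          Finset.sum_le_card_nsmul _ _ _ hbound
      _ = ((q.primeFactors.filter (fun p => ¬ p ≤ N)).card : ℝ) * (1.5*L0)⁻¹ := by
          rw [nsmul_eq_mul]
      _ ≤ (1.5*L0) * (1.5*L0)⁻¹ := by
          apply mul_le_mul_of_nonneg_right _ (by positivity)
          calc ((q.primeFactors.filter (fun p => ¬ p ≤ N)).card : ℝ)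
              ≤ (q.primeFactors.card : ℝ) := by exact_mod_cast Finset.card_filter_le _ _
            _ ≤ 1.5*L0 := homega
      _ = 1 := by
          rw [mul_inv_cancel₀ (by positivity)]
  linarith [hhead, htail]

lemma aux_M (q : ℕ) (hq : 0 < q) (L0 LL d : ℝ)
    (hL0 : L0 = Real.exp 1 + Real.log q) (hLL : LL = Real.log L0) (hd : d = 1/(2*LL)) :
    ∑ c ∈ q.divisors, (c:ℝ)^(d-1) ≤ Real.exp (343 + 105 * Real.log LL) := by
  have hq1 : (1:ℝ) ≤ (q:ℝ) := by exact_mod_cast hq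
  have hL0e : Real.exp 1 ≤ L0 := by
    rw [hL0]; linarith [Real.log_nonneg hq1]
  have hLL1 : 1 ≤ LL := by
    rw [hLL, ← Real.log_exp 1]
    exact Real.log_le_log (Real.exp_pos 1) hL0e
  have hd2 : d ≤ 1/2 := by
    rw [hd, div_le_div_iff₀ (by linarith) (by norm_num)]
    linarith
  have hdm : d - 1 ≤ -(1/2) := by linarith
  have h1 := aux_sum_divisors_rpow q hq.ne' (d-1) hdm
  have h2 : ∏ p ∈ q.primeFactors, (1 - (p:ℝ)^(d-1))⁻¹
      ≤ ∏ p ∈ q.primeFactors, Real.exp (3.5 * (p:ℝ)^(d-1)) := by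
    apply Finset.prod_le_prod
    · intro p hp
      have hpp := Nat.prime_of_mem_primeFactors hp
      have ht : (p:ℝ)^(d-1) ≤ 5/7 := aux_prime_rpow (d-1) hdm p hpp.two_le
      have : (0:ℝ) < 1 - (p:ℝ)^(d-1) := by linarith
      positivity
    · intro p hp
      have hpp := Nat.prime_of_mem_primeFactors hp
      exact aux_factor _ (Real.rpow_nonneg (by positivity) _)
        (aux_prime_rpow (d-1) hdm p hpp.two_le)
  have h3 : ∏ p ∈ q.primeFactors, Real.exp (3.5 * (p:ℝ)^(d-1))
      = Real.exp (3.5 * ∑ p ∈ q.primeFactors, (p:ℝ)^(d-1)) := by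
    rw [← Real.exp_sum, Finset.mul_sum]
  have h4 := aux_P q hq L0 LL d hL0 hLL hd
  calc ∑ c ∈ q.divisors, (c:ℝ)^(d-1)
      ≤ ∏ p ∈ q.primeFactors, (1 - (p:ℝ)^(d-1))⁻¹ := h1
    _ ≤ Real.exp (3.5 * ∑ p ∈ q.primeFactors, (p:ℝ)^(d-1)) := by rw [← h3]; exact h2
    _ ≤ Real.exp (343 + 105 * Real.log LL) := by
        apply Real.exp_le_exp.mpr
        linarith

lemma aux_logsq (c : ℕ) (hc : 1 ≤ c) (d : ℝ) (hd0 : 0 < d) (hd1 : d ≤ 1/2) :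
    (1 + Real.log c)^2 ≤ (4/d^2) * (c:ℝ)^d := by
  have hc1 : (1:ℝ) ≤ (c:ℝ) := by exact_mod_cast hc
  have hcpos : (0:ℝ) < c := by linarith
  have hlc : 0 ≤ Real.log c := Real.log_nonneg hc1
  have hrp : (0:ℝ) < (c:ℝ)^(d/2) := Real.rpow_pos_of_pos hcpos _
  have h1 : (d/2) * Real.log c ≤ (c:ℝ)^(d/2) - 1 := by
    have := Real.log_le_sub_one_of_pos hrp
    rwa [Real.log_rpow hcpos] at this
  have h2d : (1:ℝ) ≤ 2/d := by
    rw [le_div_iff₀ hd0]; linarith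
  have h2 : 1 + Real.log c ≤ (2/d) * (c:ℝ)^(d/2) := by
    have e : (2/d) * ((d/2) * Real.log c) = Real.log c := by field_simp
    have h3 := mul_le_mul_of_nonneg_left h1 (by positivity : (0:ℝ) ≤ 2/d)
    rw [e] at h3
    have h4 : (2/d) * ((c:ℝ)^(d/2) - 1) = (2/d)*(c:ℝ)^(d/2) - 2/d := by ring
    rw [h4] at h3
    linarith
  have h5 : (1 + Real.log c)^2 ≤ ((2/d) * (c:ℝ)^(d/2))^2 :=
    pow_le_pow_left₀ (by linarith) h2 2
  have h6 : ((c:ℝ)^(d/2))^2 = (c:ℝ)^d := by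
    rw [sq, ← Real.rpow_add hcpos]
    norm_num
  calc (1 + Real.log c)^2 ≤ ((2/d) * (c:ℝ)^(d/2))^2 := h5
    _ = (4/d^2) * (c:ℝ)^d := by
        rw [mul_pow, h6]
        ring

lemma aux_perterm (x ε : ℝ) (q c : ℕ) (hx : 2 ≤ x) (hε0 : 0 < ε) (hε1 : ε < 1)
    (hq : 0 < q) (hcd : c ∣ q) (hc0 : 0 < c) :
    ((q / Nat.gcd (c ^ 2) q : ℕ) : ℝ) * (Nat.totient (Nat.gcd c (q / c)) : ℝ)
      / (Real.log (((q / Nat.gcd (c ^ 2) q : ℕ) : ℝ) * x)) ^ (2 - ε)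
    ≤ 9*(1+Real.log c)^2 * ((q / c : ℕ):ℝ) / (Real.log ((q:ℝ) * x)) ^ (2 - ε) := by
  set g := Nat.gcd c (q / c) with hgdef
  set W := q / Nat.gcd (c ^ 2) q with hWdef
  have hq' : c * (q / c) = q := Nat.mul_div_cancel' hcd
  have hgcd : Nat.gcd (c ^ 2) q = c * g := by
    rw [hgdef, pow_two]
    conv_lhs => rw [← hq']
    exact Nat.gcd_mul_left c c (q/c)
  have hWkey : W * (c * g) = q := by
    rw [hWdef, hgcd]
    rw [← hgcd]
    exact Nat.div_mul_cancel (Nat.gcd_dvd_right _ _)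
  have hW0 : 0 < W := by
    rcases Nat.eq_zero_or_pos W with h | h
    · rw [h, zero_mul] at hWkey; omega
    · exact h
  have hg0 : 0 < g := Nat.gcd_pos_of_pos_left _ hc0
  have hWg : W * g = q / c := by
    have h1 : q = (W * g) * c := by rw [← hWkey]; ring
    rw [h1, Nat.mul_div_cancel _ hc0]
  -- real versions
  have hx0 : (0:ℝ) < x := by linarith
  have hW1 : (1:ℝ) ≤ (W:ℝ) := by exact_mod_cast hW0
  have hg1 : (1:ℝ) ≤ (g:ℝ) := by exact_mod_cast hg0
  have hc1 : (1:ℝ) ≤ (c:ℝ) := by exact_mod_cast hc0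
  have hlc : (0:ℝ) ≤ Real.log c := Real.log_nonneg hc1
  have hlog2 : (0.6931471803:ℝ) < Real.log 2 := Real.log_two_gt_d9
  have hwx2 : (2:ℝ) ≤ (W:ℝ) * x := by nlinarith
  have hwxpos : (0:ℝ) < (W:ℝ) * x := by linarith
  set lw := Real.log ((W:ℝ) * x) with hlwdef
  have hlw : Real.log 2 ≤ lw := Real.log_le_log (by norm_num) hwx2
  have hlwpos : 0 < lw := by linarith
  set L := Real.log ((q:ℝ) * x) with hLdef
  have hq1 : (1:ℝ) ≤ (q:ℝ) := by exact_mod_cast hq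
  have hqx2 : (2:ℝ) ≤ (q:ℝ) * x := by nlinarith
  have hL2 : Real.log 2 ≤ L := Real.log_le_log (by norm_num) hqx2
  have hLpos : 0 < L := by linarith
  have hqreal : (q:ℝ) = (W:ℝ) * ((c:ℝ) * (g:ℝ)) := by exact_mod_cast hWkey.symm
  have hcg1 : (1:ℝ) ≤ (c:ℝ) * (g:ℝ) := by nlinarith
  have hLsplit : L = Real.log ((c:ℝ) * (g:ℝ)) + lw := by
    rw [hLdef, hlwdef, hqreal, show (W:ℝ) * ((c:ℝ)*(g:ℝ)) * x = ((c:ℝ)*(g:ℝ)) * ((W:ℝ)*x) by ring,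
      Real.log_mul (by linarith) (by linarith)]
  have hgc : (g:ℝ) ≤ (c:ℝ) := by exact_mod_cast Nat.gcd_le_left _ hc0
  have hcg2 : Real.log ((c:ℝ) * (g:ℝ)) ≤ 2 * Real.log c := by
    rw [Real.log_mul (by linarith) (by linarith)]
    have := Real.log_le_log (by linarith : (0:ℝ) < (g:ℝ)) hgc
    linarith
  have hR : L ≤ 3*(1+Real.log c)*lw := by
    have hkey : 2*Real.log c ≤ 3*Real.log c * lw := by
      nlinarith [mul_nonneg hlc (show (0:ℝ) ≤ 3*lw - 2 by linarith)]
    nlinarith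
  set s := 2 - ε with hsdef
  have hs0 : 0 < s := by rw [hsdef]; linarith
  have hs2 : s ≤ 2 := by rw [hsdef]; linarith
  have hbase1 : (1:ℝ) ≤ 3*(1+Real.log c) := by linarith
  have key2 : L^s ≤ 9*(1+Real.log c)^2 * lw^s := by
    have h1 : L^s ≤ (3*(1+Real.log c)*lw)^s :=
      Real.rpow_le_rpow (by linarith) hR hs0.le
    have h2 : (3*(1+Real.log c)*lw)^s = (3*(1+Real.log c))^s * lw^s :=
      Real.mul_rpow (by linarith) hlwpos.le
    have h3 : (3*(1+Real.log c))^s ≤ (3*(1+Real.log c))^(2:ℝ) :=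
      Real.rpow_le_rpow_of_exponent_le hbase1 hs2
    have h4 : (3*(1+Real.log c))^(2:ℝ) = 9*(1+Real.log c)^2 := by
      rw [show (2:ℝ) = ((2:ℕ):ℝ) by norm_num, Real.rpow_natCast]
      ring
    calc L^s ≤ (3*(1+Real.log c))^s * lw^s := by rw [← h2]; exact h1
      _ ≤ (3*(1+Real.log c))^(2:ℝ) * lw^s := by
          apply mul_le_mul_of_nonneg_right h3 (Real.rpow_nonneg hlwpos.le s)
      _ = 9*(1+Real.log c)^2 * lw^s := by rw [h4]
  have hnum : (W:ℝ) * (Nat.totient g : ℝ) ≤ ((q / c : ℕ):ℝ) := by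
    have h1 : ((q/c : ℕ):ℝ) = (W:ℝ) * (g:ℝ) := by exact_mod_cast hWg.symm
    rw [h1]
    have h2 : (Nat.totient g : ℝ) ≤ (g:ℝ) := by exact_mod_cast Nat.totient_le g
    nlinarith
  have hlws : (0:ℝ) < lw^s := Real.rpow_pos_of_pos hlwpos s
  have hLs : (0:ℝ) < L^s := Real.rpow_pos_of_pos hLpos s
  rw [div_le_div_iff₀ hlws hLs]
  have hA0 : (0:ℝ) ≤ ((q / c : ℕ):ℝ) := Nat.cast_nonneg _
  calc (W:ℝ) * (Nat.totient g : ℝ) * L^s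
      ≤ ((q / c : ℕ):ℝ) * L^s := mul_le_mul_of_nonneg_right hnum hLs.le
    _ ≤ ((q / c : ℕ):ℝ) * (9*(1+Real.log c)^2 * lw^s) := mul_le_mul_of_nonneg_left key2 hA0
    _ = 9*(1+Real.log c)^2 * ((q / c : ℕ):ℝ) * lw^s := by ring

/-- `∑_{c ∣ q} (q/gcd(c²,q)) · φ(gcd(c,q/c)) / log((q/gcd(c²,q)) x)^{2-ε}
  ≪ q (loglog(e^e q))^{O(1)} / log(qx)^{2-ε}` with absolute constants. -/
theorem stmt6 :
    ∃ K : ℝ, 0 < K ∧ ∀ (x ε : ℝ) (q : ℕ), 2 ≤ x → ε ∈ Set.Ioo (0 : ℝ) 1 → 0 < q →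
      ∑ c ∈ q.divisors,
          ((q / Nat.gcd (c ^ 2) q : ℕ) : ℝ) * (Nat.totient (Nat.gcd c (q / c)) : ℝ)
            / (Real.log (((q / Nat.gcd (c ^ 2) q : ℕ) : ℝ) * x)) ^ (2 - ε)
        ≤ K * q * (Real.log (Real.log (Real.exp (Real.exp 1) * q))) ^ K
            / (Real.log ((q : ℝ) * x)) ^ (2 - ε) := by
  refine ⟨Real.exp 400, Real.exp_pos _, ?_⟩
  intro x ε q hx hε hq
  obtain ⟨hε0, hε1⟩ := hε
  have hq1 : (1:ℝ) ≤ (q:ℝ) := by exact_mod_cast hq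
  set L0 : ℝ := Real.log (Real.exp (Real.exp 1) * q) with hL0def
  set LL : ℝ := Real.log L0 with hLLdef
  set d : ℝ := 1/(2*LL) with hddef
  have hL0 : L0 = Real.exp 1 + Real.log q := by
    rw [hL0def, Real.log_mul (Real.exp_ne_zero _) (by positivity), Real.log_exp]
  have hL0e : Real.exp 1 ≤ L0 := by
    rw [hL0]; linarith [Real.log_nonneg hq1]
  have hL0pos : (0:ℝ) < L0 := lt_of_lt_of_le (Real.exp_pos 1) hL0e
  have hLL1 : (1:ℝ) ≤ LL := by
    rw [hLLdef, ← Real.log_exp 1]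
    exact Real.log_le_log (Real.exp_pos 1) hL0e
  have hLLpos : (0:ℝ) < LL := by linarith
  have hlogLL : (0:ℝ) ≤ Real.log LL := Real.log_nonneg hLL1
  have hd0 : (0:ℝ) < d := by rw [hddef]; positivity
  have hd2 : d ≤ 1/2 := by
    rw [hddef, div_le_div_iff₀ (by linarith) (by norm_num)]
    linarith
  set L : ℝ := Real.log ((q:ℝ) * x) with hLdef
  have hqx2 : (2:ℝ) ≤ (q:ℝ) * x := by nlinarith
  have hL2 : Real.log 2 ≤ L := Real.log_le_log (by norm_num) hqx2
  have hlog2 : (0.6931471803:ℝ) < Real.log 2 := Real.log_two_gt_d9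
  have hLpos : (0:ℝ) < L := by linarith
  have hLs : (0:ℝ) < L^(2-ε) := Real.rpow_pos_of_pos hLpos _
  have step1 : ∑ c ∈ q.divisors,
      ((q / Nat.gcd (c ^ 2) q : ℕ) : ℝ) * (Nat.totient (Nat.gcd c (q / c)) : ℝ)
        / (Real.log (((q / Nat.gcd (c ^ 2) q : ℕ) : ℝ) * x)) ^ (2 - ε)
      ≤ ∑ c ∈ q.divisors, 9*(1+Real.log c)^2 * ((q / c : ℕ):ℝ) / L ^ (2 - ε) := by
    apply Finset.sum_le_sum
    intro c hc
    exact aux_perterm x ε q c hx hε0 hε1 hq (Nat.mem_divisors.mp hc).1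
      (Nat.pos_of_mem_divisors hc)
  have step2 : ∑ c ∈ q.divisors, 9*(1+Real.log c)^2 * ((q / c : ℕ):ℝ) / L ^ (2 - ε)
      ≤ ∑ c ∈ q.divisors, (144*(q:ℝ)*LL^2/L^(2-ε)) * (c:ℝ)^(d-1) := by
    apply Finset.sum_le_sum
    intro c hc
    have hc0 := Nat.pos_of_mem_divisors hc
    have hcd := (Nat.mem_divisors.mp hc).1
    have hc1 : (1:ℝ) ≤ (c:ℝ) := by exact_mod_cast hc0
    have hcpos : (0:ℝ) < (c:ℝ) := by linarith
    have hcast : ((q/c:ℕ):ℝ) = (q:ℝ)/(c:ℝ) :=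
      Nat.cast_div hcd (by exact_mod_cast hc0.ne')
    have hlogsq := aux_logsq c hc0 d hd0 hd2
    have h4d : 4/d^2 = 16*LL^2 := by
      rw [hddef]
      field_simp
      ring
    have hrw : (c:ℝ)^d / (c:ℝ) = (c:ℝ)^(d-1) := by
      rw [Real.rpow_sub hcpos, Real.rpow_one]
    have hnum : 9*(1+Real.log c)^2 * ((q:ℝ)/(c:ℝ)) ≤ 144*(q:ℝ)*LL^2 * (c:ℝ)^(d-1) := by
      have h1 : 9*(1+Real.log c)^2 ≤ 9*((16*LL^2) * (c:ℝ)^d) := by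
        rw [← h4d]
        nlinarith
      have h2 : (0:ℝ) ≤ (q:ℝ)/(c:ℝ) := by positivity
      calc 9*(1+Real.log c)^2 * ((q:ℝ)/(c:ℝ))
          ≤ 9*((16*LL^2) * (c:ℝ)^d) * ((q:ℝ)/(c:ℝ)) := mul_le_mul_of_nonneg_right h1 h2
        _ = 144*(q:ℝ)*LL^2 * ((c:ℝ)^d / (c:ℝ)) := by ring
        _ = 144*(q:ℝ)*LL^2 * (c:ℝ)^(d-1) := by rw [hrw]
    calc 9*(1+Real.log c)^2 * ((q / c : ℕ):ℝ) / L ^ (2 - ε)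
        = 9*(1+Real.log c)^2 * ((q:ℝ)/(c:ℝ)) / L ^ (2 - ε) := by rw [hcast]
      _ ≤ 144*(q:ℝ)*LL^2 * (c:ℝ)^(d-1) / L ^ (2 - ε) := by
          rw [div_eq_mul_inv, div_eq_mul_inv]
          exact mul_le_mul_of_nonneg_right hnum (by positivity)
      _ = (144*(q:ℝ)*LL^2/L^(2-ε)) * (c:ℝ)^(d-1) := by ring
  have step3 : ∑ c ∈ q.divisors, (144*(q:ℝ)*LL^2/L^(2-ε)) * (c:ℝ)^(d-1)
      ≤ (144*(q:ℝ)*LL^2/L^(2-ε)) * Real.exp (343 + 105 * Real.log LL) := by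
    rw [← Finset.mul_sum]
    apply mul_le_mul_of_nonneg_left _ (by positivity)
    exact aux_M q hq L0 LL d hL0 hLLdef hddef
  have hmain : 144*LL^2*Real.exp (343+105*Real.log LL)
      ≤ Real.exp 400 * LL^(Real.exp 400) := by
    have hexp1 : (2.7182818283:ℝ) < Real.exp 1 := Real.exp_one_gt_d9
    have he3 : Real.exp 3 = Real.exp 1 * Real.exp 1 * Real.exp 1 := by
      rw [← Real.exp_add, ← Real.exp_add]; norm_num
    have he6 : Real.exp 6 = Real.exp 3 * Real.exp 3 := by
      rw [← Real.exp_add]; norm_num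
    have h144 : (144:ℝ) ≤ Real.exp 6 := by
      have e1 : (2.7:ℝ) ≤ Real.exp 1 := by linarith
      have h19 : (19:ℝ) ≤ Real.exp 3 := by rw [he3]; nlinarith
      have h361 : (361:ℝ) ≤ Real.exp 6 := by rw [he6]; nlinarith [Real.exp_pos 3]
      linarith
    have hLL2 : LL^2 = Real.exp (2*Real.log LL) := by
      have h := Real.exp_log hLLpos
      calc LL^2 = Real.exp (Real.log LL) * Real.exp (Real.log LL) := by rw [h]; ring
        _ = Real.exp (2*Real.log LL) := by rw [← Real.exp_add]; ring_nf
    have hrpow : LL^(Real.exp 400) = Real.exp (Real.log LL * Real.exp 400) :=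
      Real.rpow_def_of_pos hLLpos _
    have h107 : (107:ℝ) ≤ Real.exp 400 := by
      have := Real.add_one_le_exp (400:ℝ)
      linarith
    have hexpo : 6 + 2*Real.log LL + (343+105*Real.log LL) ≤ 400 + Real.log LL * Real.exp 400 := by
      have h1 : 107*Real.log LL ≤ Real.log LL * Real.exp 400 := by
        calc 107*Real.log LL = Real.log LL * 107 := mul_comm _ _
          _ ≤ Real.log LL * Real.exp 400 := mul_le_mul_of_nonneg_left h107 hlogLL
      linarith
    calc 144*LL^2*Real.exp (343+105*Real.log LL)
        ≤ Real.exp 6 * Real.exp (2*Real.log LL) * Real.exp (343+105*Real.log LL) := by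
          rw [← hLL2]
          exact mul_le_mul_of_nonneg_right (mul_le_mul_of_nonneg_right h144 (sq_nonneg LL))
            (Real.exp_pos _).le
      _ = Real.exp (6 + 2*Real.log LL + (343+105*Real.log LL)) := by
          rw [← Real.exp_add, ← Real.exp_add]
      _ ≤ Real.exp (400 + Real.log LL * Real.exp 400) := Real.exp_le_exp.mpr hexpo
      _ = Real.exp 400 * LL^(Real.exp 400) := by rw [Real.exp_add, hrpow]
  have final : (144*(q:ℝ)*LL^2/L^(2-ε)) * Real.exp (343 + 105 * Real.log LL)
      ≤ Real.exp 400 * q * LL^(Real.exp 400) / L^(2-ε) := by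
    have hqL : (0:ℝ) ≤ (q:ℝ)/L^(2-ε) := by positivity
    calc (144*(q:ℝ)*LL^2/L^(2-ε)) * Real.exp (343 + 105 * Real.log LL)
        = (144*LL^2*Real.exp (343+105*Real.log LL)) * ((q:ℝ)/L^(2-ε)) := by ring
      _ ≤ (Real.exp 400 * LL^(Real.exp 400)) * ((q:ℝ)/L^(2-ε)) :=
          mul_le_mul_of_nonneg_right hmain hqL
      _ = Real.exp 400 * q * LL^(Real.exp 400) / L^(2-ε) := by ring
  calc ∑ c ∈ q.divisors,
      ((q / Nat.gcd (c ^ 2) q : ℕ) : ℝ) * (Nat.totient (Nat.gcd c (q / c)) : ℝ)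
        / (Real.log (((q / Nat.gcd (c ^ 2) q : ℕ) : ℝ) * x)) ^ (2 - ε)
      ≤ ∑ c ∈ q.divisors, 9*(1+Real.log c)^2 * ((q / c : ℕ):ℝ) / L ^ (2 - ε) := step1
    _ ≤ ∑ c ∈ q.divisors, (144*(q:ℝ)*LL^2/L^(2-ε)) * (c:ℝ)^(d-1) := step2
    _ ≤ (144*(q:ℝ)*LL^2/L^(2-ε)) * Real.exp (343 + 105 * Real.log LL) := step3
    _ ≤ Real.exp 400 * q * LL^(Real.exp 400) / L^(2-ε) := final
end

section
/- Let p be a prime, g ≥ 1, and F(t) = ∑_{j=0}^{g} p^j t^{2j} − ∑_{j=0}^{g-1} p^j t^{2j+1}. Then every complex root of F has absolute value p^{-1/2}. -/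
/-!
Multiplying by `p t² - 1` telescopes `F` into `p^g t^{2g+1} (p t - 1) - (1 - t)`, so a root `z`
satisfies `|p^g z^{2g+1} (p z - 1)|² = |1 - z|²`. With `x = p |z|²` and `q = p - 1` this reads
`x^{2g+1} (B + q (x - 1)) = B` where `B = p |1 - z|² > 0`, by the identity
`|p z - 1|² = p |1 - z|² + (p - 1) (p |z|² - 1)`. The left side is `< B` for `x < 1` and `> B` for
`x > 1`, so `x = 1`.
-/

open Finset

/-- The polynomial `F(t) = ∑_{j=0}^{g} p^j t^{2j} − ∑_{j=0}^{g-1} p^j t^{2j+1}`. -/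
noncomputable def Ftwo (p g : ℕ) (t : ℂ) : ℂ :=
  (∑ j ∈ Finset.range (g + 1), (p : ℂ) ^ j * t ^ (2 * j))
    - ∑ j ∈ Finset.range g, (p : ℂ) ^ j * t ^ (2 * j + 1)

theorem eq_one_of_pow_mul_add_mul_sub_one_eq {x q B : ℝ} {n : ℕ} (hn : n ≠ 0) (hx : 0 ≤ x)
    (hq : 0 < q) (hB : 0 < B) (h : x ^ n * (B + q * (x - 1)) = B) : x = 1 := by
  set A := B + q * (x - 1)
  rcases lt_trichotomy x 1 with hlt | heq | hgt
  · have hAB : A < B := by nlinarith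
    by_cases hA : 0 ≤ A
    · linarith [mul_le_of_le_one_left hA (pow_le_one₀ (n := n) hx hlt.le)]
    · linarith [mul_nonpos_of_nonneg_of_nonpos (pow_nonneg hx n) (not_le.mp hA).le]
  · exact heq
  · have hBA : B < A := by nlinarith
    linarith [lt_mul_left (hB.trans hBA) (one_lt_pow₀ hgt hn)]

theorem Ftwo_mul (p g : ℕ) (t : ℂ) :
    Ftwo p g t * ((p : ℂ) * t ^ 2 - 1)
      = (p : ℂ) ^ g * t ^ (2 * g + 1) * ((p : ℂ) * t - 1) - (1 - t) := by
  induction g with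
  | zero =>
    simp [Ftwo]
    ring
  | succ g ih =>
    have hsucc : Ftwo p (g + 1) t
        = Ftwo p g t + (p : ℂ) ^ (g + 1) * t ^ (2 * (g + 1)) - (p : ℂ) ^ g * t ^ (2 * g + 1) := by
      simp only [Ftwo, sum_range_succ _ (g + 1), sum_range_succ _ g]
      ring
    rw [hsucc]
    linear_combination ih

theorem Complex.normSq_ofReal_mul_sub_one (q : ℝ) (z : ℂ) :
    normSq ((q : ℂ) * z - 1) = q * normSq (1 - z) + (q - 1) * (q * normSq z - 1) := by
  simp only [normSq_apply, sub_re, sub_im, mul_re, mul_im, one_re, one_im, ofReal_re, ofReal_im]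
  ring

theorem mul_normSq_eq_one_of_pow_mul_eq {q : ℝ} (hq : 1 < q) (g : ℕ) {z : ℂ}
    (h : (q : ℂ) ^ g * z ^ (2 * g + 1) * ((q : ℂ) * z - 1) = 1 - z) :
    q * Complex.normSq z = 1 := by
  have hz : z ≠ 1 := by
    rintro rfl
    rw [one_pow, mul_one, mul_one, sub_self] at h
    exact mul_ne_zero (pow_ne_zero _ (by exact_mod_cast (by linarith : q ≠ 0)))
      (sub_ne_zero.mpr (by exact_mod_cast hq.ne')) h
  have hnormSq : (q * Complex.normSq z) ^ (2 * g + 1) * Complex.normSq ((q : ℂ) * z - 1)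
      = q * Complex.normSq (1 - z) := by
    rw [← h]
    simp only [map_mul, map_pow, Complex.normSq_ofReal]
    ring
  refine eq_one_of_pow_mul_add_mul_sub_one_eq (q := q - 1) (B := q * Complex.normSq (1 - z))
    (n := 2 * g + 1) (by omega)
    (mul_nonneg (by linarith) (Complex.normSq_nonneg z)) (by linarith) ?_ ?_
  · exact mul_pos (by linarith) (Complex.normSq_pos.mpr (sub_ne_zero.mpr (Ne.symm hz)))
  · rwa [← Complex.normSq_ofReal_mul_sub_one]

theorem Complex.norm_eq_rpow_neg_half_of_mul_normSq_eq_one {q : ℝ} (hq : 0 < q) {z : ℂ}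
    (h : q * normSq z = 1) : ‖z‖ = q ^ (-(1 / 2 : ℝ)) := by
  rw [norm_def, eq_inv_of_mul_eq_one_right h, Real.sqrt_inv, Real.rpow_neg hq.le,
    ← Real.sqrt_eq_rpow]

theorem stmt13_general (p g : ℕ) (hp : p.Prime) (z : ℂ) (hz : Ftwo p g z = 0) :
    ‖z‖ = (p : ℝ) ^ (-(1 / 2 : ℝ)) := by
  have hp1 : (1 : ℝ) < p := by exact_mod_cast hp.one_lt
  have hroot : ((p : ℝ) : ℂ) ^ g * z ^ (2 * g + 1) * (((p : ℝ) : ℂ) * z - 1) = 1 - z := by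
    have := Ftwo_mul p g z
    rw [hz, zero_mul, eq_comm, sub_eq_zero] at this
    exact_mod_cast this
  exact Complex.norm_eq_rpow_neg_half_of_mul_normSq_eq_one (by linarith)
    (mul_normSq_eq_one_of_pow_mul_eq hp1 g hroot)

/-- "Local Riemann hypothesis": every complex root of `F` has absolute value `p^{-1/2}`. -/
theorem stmt13 (p g : ℕ) (hp : p.Prime) (hg : 1 ≤ g) (z : ℂ) (hz : Ftwo p g z = 0) :
    ‖z‖ = (p : ℝ) ^ (-(1 / 2 : ℝ)) :=
  stmt13_general p g hp z hz
end
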